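/- Let Y be a random variable uniformly distributed on [−1/2, 1/2]. Then the distribution of sin(2πY) is absolutely continuous with respect to Lebesgue measure on ℝ, with probability density function y ↦ 1/(π√(1−y²)) for −1 < y < 1 and 0 otherwise; equivalently, the pushforward of the uniform probability measure on [−1/2, 1/2] under the map y ↦ sin(2πy) has density 1/(π√(1−y²)) on (−1, 1). -/

import Mathlib

open MeasureTheory Real

/-- The uniform probability measure on `[-1/2, 1/2]`. -/
noncomputable def unifHalf : Measure ℝ := volume.restrict (Set.Icc (-(1/2) : ℝ) (1/2))

noncomputable def fsin (y : ℝ) : ℝ := Real.sin (2 * π * y)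

lemma fsin_cont : Continuous fsin := by unfold fsin; continuity

lemma hasDerivAt_fsin (y : ℝ) : HasDerivAt fsin (2 * π * Real.cos (2 * π * y)) y := by
  have h : HasDerivAt (fun y : ℝ => 2 * π * y) (2 * π) y := by
    simpa using (hasDerivAt_id y).const_mul (2 * π)
  unfold fsin
  simpa [mul_comm] using h.sin

lemma fsin_neg_half : fsin (-(1/2)) = 0 := by
  unfold fsin; rw [show 2 * π * (-(1/2)) = -π by ring]; simp

lemma fsin_half : fsin (1/2) = 0 := by
  unfold fsin; rw [show 2 * π * (1/2) = π by ring]; simp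

lemma fsin_neg_quarter : fsin (-(1/4)) = -1 := by
  unfold fsin; rw [show 2 * π * (-(1/4)) = -(π/2) by ring]; simp

lemma fsin_quarter : fsin (1/4) = 1 := by
  unfold fsin; rw [show 2 * π * (1/4) = π/2 by ring]; simp

lemma cos_pos_mid : ∀ x ∈ Set.Ioo (-(1/4):ℝ) (1/4), 0 < Real.cos (2*π*x) := by
  intro x hx
  apply Real.cos_pos_of_mem_Ioo
  constructor
  · nlinarith [hx.1, Real.pi_pos]
  · nlinarith [hx.2, Real.pi_pos]

lemma cos_neg_left : ∀ x ∈ Set.Ioo (-(1/2):ℝ) (-(1/4)), Real.cos (2*π*x) < 0 := by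
  intro x hx
  rw [← Real.cos_neg]
  apply Real.cos_neg_of_pi_div_two_lt_of_lt
  · nlinarith [hx.2, Real.pi_pos]
  · nlinarith [hx.1, Real.pi_pos]

lemma cos_neg_right : ∀ x ∈ Set.Ioo ((1/4):ℝ) (1/2), Real.cos (2*π*x) < 0 := by
  intro x hx
  apply Real.cos_neg_of_pi_div_two_lt_of_lt
  · nlinarith [hx.1, Real.pi_pos]
  · nlinarith [hx.2, Real.pi_pos]

lemma mono_mid : StrictMonoOn fsin (Set.Icc (-(1/4):ℝ) (1/4)) := by
  apply strictMonoOn_of_deriv_pos (convex_Icc _ _) fsin_cont.continuousOn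
  intro x hx
  rw [interior_Icc] at hx
  rw [(hasDerivAt_fsin x).deriv]
  have := cos_pos_mid x hx
  positivity

lemma anti_left : StrictAntiOn fsin (Set.Icc (-(1/2):ℝ) (-(1/4))) := by
  apply strictAntiOn_of_deriv_neg (convex_Icc _ _) fsin_cont.continuousOn
  intro x hx
  rw [interior_Icc] at hx
  rw [(hasDerivAt_fsin x).deriv]
  have := cos_neg_left x hx
  nlinarith [Real.pi_pos]

lemma anti_right : StrictAntiOn fsin (Set.Icc ((1/4):ℝ) (1/2)) := by
  apply strictAntiOn_of_deriv_neg (convex_Icc _ _) fsin_cont.continuousOn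
  intro x hx
  rw [interior_Icc] at hx
  rw [(hasDerivAt_fsin x).deriv]
  have := cos_neg_right x hx
  nlinarith [Real.pi_pos]

lemma image_mid : fsin '' Set.Ioo (-(1/4):ℝ) (1/4) = Set.Ioo (-1 : ℝ) 1 := by
  apply Set.Subset.antisymm
  · rintro x ⟨y, hy, rfl⟩
    constructor
    · rw [← fsin_neg_quarter]
      exact mono_mid (Set.mem_Icc.2 ⟨le_refl _, by norm_num⟩)
        (Set.mem_Icc.2 ⟨hy.1.le, hy.2.le⟩) hy.1
    · rw [← fsin_quarter]
      exact mono_mid (Set.mem_Icc.2 ⟨hy.1.le, hy.2.le⟩)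
        (Set.mem_Icc.2 ⟨by norm_num, le_refl _⟩) hy.2
  · have := intermediate_value_Ioo (by norm_num : (-(1/4):ℝ) ≤ 1/4) fsin_cont.continuousOn
    rwa [fsin_neg_quarter, fsin_quarter] at this

lemma image_left : fsin '' Set.Ioo (-(1/2):ℝ) (-(1/4)) = Set.Ioo (-1 : ℝ) 0 := by
  apply Set.Subset.antisymm
  · rintro x ⟨y, hy, rfl⟩
    constructor
    · rw [← fsin_neg_quarter]
      exact anti_left (Set.mem_Icc.2 ⟨hy.1.le, hy.2.le⟩)
        (Set.mem_Icc.2 ⟨by norm_num, le_refl _⟩) hy.2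
    · rw [← fsin_neg_half]
      exact anti_left (Set.mem_Icc.2 ⟨le_refl _, by norm_num⟩)
        (Set.mem_Icc.2 ⟨hy.1.le, hy.2.le⟩) hy.1
  · have := intermediate_value_Ioo' (by norm_num : (-(1/2):ℝ) ≤ -(1/4)) fsin_cont.continuousOn
    rwa [fsin_neg_quarter, fsin_neg_half] at this

lemma image_right : fsin '' Set.Ioo ((1/4):ℝ) (1/2) = Set.Ioo (0 : ℝ) 1 := by
  apply Set.Subset.antisymm
  · rintro x ⟨y, hy, rfl⟩
    constructor
    · rw [← fsin_half]
      exact anti_right (Set.mem_Icc.2 ⟨hy.1.le, hy.2.le⟩)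
        (Set.mem_Icc.2 ⟨by norm_num, le_refl _⟩) hy.2
    · rw [← fsin_quarter]
      exact anti_right (Set.mem_Icc.2 ⟨le_refl _, by norm_num⟩)
        (Set.mem_Icc.2 ⟨hy.1.le, hy.2.le⟩) hy.1
  · have := intermediate_value_Ioo' (by norm_num : ((1/4):ℝ) ≤ 1/2) fsin_cont.continuousOn
    rwa [fsin_quarter, fsin_half] at this




noncomputable def cdens (x : ℝ) : ENNReal := (ENNReal.ofReal (2 * π * Real.sqrt (1 - x ^ 2)))⁻¹

lemma cdens_meas : Measurable cdens := by
  unfold cdens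
  exact (ENNReal.measurable_ofReal.comp
    ((continuous_const.mul ((continuous_const.sub (continuous_pow 2)).sqrt)).measurable)).inv

lemma map_piece {a b : ℝ} (hinj : Set.InjOn fsin (Set.Ioo a b))
    (hcos : ∀ y ∈ Set.Ioo a b, Real.cos (2 * π * y) ≠ 0)
    {t : Set ℝ} (himg : fsin '' Set.Ioo a b = t) (ht : MeasurableSet t) :
    Measure.map fsin (volume.restrict (Set.Ioo a b))
      = volume.withDensity (t.indicator cdens) := by
  have hmeas : Measurable fsin := fsin_cont.measurable
  ext A hA
  rw [Measure.map_apply hmeas hA, Measure.restrict_apply (hmeas hA),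
    withDensity_apply _ hA]
  have key := lintegral_image_eq_lintegral_abs_det_fderiv_mul (volume : Measure ℝ)
      (measurableSet_Ioo (a := a) (b := b))
      (fun x _ => ((hasDerivAt_fsin x).hasDerivWithinAt (s := Set.Ioo a b)).hasFDerivWithinAt)
      hinj (fun x => A.indicator (fun _ => (1 : ENNReal)) x * cdens x)
  rw [himg] at key
  have step1 : volume (fsin ⁻¹' A ∩ Set.Ioo a b)
      = ∫⁻ y in Set.Ioo a b, A.indicator (fun _ => (1 : ENNReal)) (fsin y) := by
    have h1 : ∀ y, A.indicator (fun _ => (1 : ENNReal)) (fsin y)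
        = (fsin ⁻¹' A).indicator (fun _ => (1 : ENNReal)) y := by
      intro y; by_cases h : fsin y ∈ A <;> simp [h]
    simp_rw [h1]
    rw [← Measure.restrict_apply (hmeas hA)]
    exact (lintegral_indicator_one (hmeas hA)).symm
  have step2 : ∫⁻ y in Set.Ioo a b,
      ENNReal.ofReal |((1 : ℝ →L[ℝ] ℝ).smulRight (2 * π * Real.cos (2 * π * y))).det|
        * (A.indicator (fun _ => (1 : ENNReal)) (fsin y) * cdens (fsin y))
      = ∫⁻ y in Set.Ioo a b, A.indicator (fun _ => (1 : ENNReal)) (fsin y) := by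
    apply setLIntegral_congr_fun measurableSet_Ioo
    intro y hy
    beta_reduce
    rw [ContinuousLinearMap.det_smulRight, ContinuousLinearMap.one_apply, one_mul]
    have hsq : Real.sqrt (1 - fsin y ^ 2) = |Real.cos (2 * π * y)| := by
      rw [show (1 : ℝ) - fsin y ^ 2 = Real.cos (2 * π * y) ^ 2 by
        rw [Real.cos_sq']; rfl]
      exact Real.sqrt_sq_eq_abs _
    have habs : 2 * π * Real.sqrt (1 - fsin y ^ 2) = |2 * π * Real.cos (2 * π * y)| := by
      rw [hsq, abs_mul, abs_of_pos (by positivity : (0:ℝ) < 2 * π)]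
    have hr : (0:ℝ) < |2 * π * Real.cos (2 * π * y)| := by
      have := hcos y hy
      positivity
    have hne : ENNReal.ofReal |2 * π * Real.cos (2 * π * y)| ≠ 0 :=
      ne_of_gt (ENNReal.ofReal_pos.2 hr)
    unfold cdens
    rw [habs, show ENNReal.ofReal |2 * π * Real.cos (2 * π * y)|
        * (A.indicator (fun _ => (1 : ENNReal)) (fsin y)
          * (ENNReal.ofReal |2 * π * Real.cos (2 * π * y)|)⁻¹)
      = (ENNReal.ofReal |2 * π * Real.cos (2 * π * y)|
          * (ENNReal.ofReal |2 * π * Real.cos (2 * π * y)|)⁻¹)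
        * A.indicator (fun _ => (1 : ENNReal)) (fsin y) by ring,
      ENNReal.mul_inv_cancel hne ENNReal.ofReal_ne_top, one_mul]
  have step3 : ∫⁻ x in A, t.indicator cdens x
      = ∫⁻ x in t, A.indicator (fun _ => (1 : ENNReal)) x * cdens x := by
    rw [← lintegral_indicator hA, ← lintegral_indicator ht]
    congr 1
    funext x
    by_cases hx : x ∈ A <;> by_cases hxt : x ∈ t <;>
      simp [hx, hxt, Set.indicator_of_mem, Set.indicator_of_notMem]
  rw [step3, key, step1]
  exact (step2).symm





lemma density_ae_eq :
    ((Set.Ioo (-1:ℝ) 0).indicator cdens + (Set.Ioo (-1:ℝ) 1).indicator cdens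
      + (Set.Ioo (0:ℝ) 1).indicator cdens)
    =ᵐ[volume] (fun y : ℝ =>
      ENNReal.ofReal
        (Set.indicator (Set.Ioo (-1 : ℝ) 1) (fun y => 1 / (π * Real.sqrt (1 - y ^ 2))) y)) := by
  have hpt : ∀ x : ℝ, x ≠ 0 →
      ((Set.Ioo (-1:ℝ) 0).indicator cdens + (Set.Ioo (-1:ℝ) 1).indicator cdens
        + (Set.Ioo (0:ℝ) 1).indicator cdens) x
      = ENNReal.ofReal
          (Set.indicator (Set.Ioo (-1 : ℝ) 1) (fun y => 1 / (π * Real.sqrt (1 - y ^ 2))) x) := by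
    intro x hx0
    by_cases hx : x ∈ Set.Ioo (-1:ℝ) 1
    · have hu : (0:ℝ) < Real.sqrt (1 - x ^ 2) := by
        apply Real.sqrt_pos.2
        nlinarith [hx.1, hx.2]
      have hc : cdens x = ENNReal.ofReal ((2 * π * Real.sqrt (1 - x ^ 2))⁻¹) := by
        unfold cdens
        rw [ENNReal.ofReal_inv_of_pos (by positivity)]
      have hsum : ENNReal.ofReal ((2 * π * Real.sqrt (1 - x ^ 2))⁻¹)
          + ENNReal.ofReal ((2 * π * Real.sqrt (1 - x ^ 2))⁻¹)
          = ENNReal.ofReal (1 / (π * Real.sqrt (1 - x ^ 2))) := by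
        rw [← ENNReal.ofReal_add (by positivity) (by positivity)]
        congr 1
        have hπ : π ≠ 0 := Real.pi_ne_zero
        field_simp
        ring
      rcases lt_or_gt_of_ne hx0 with hneg | hpos
      · have h1 : x ∈ Set.Ioo (-1:ℝ) 0 := ⟨hx.1, hneg⟩
        have h3 : x ∉ Set.Ioo (0:ℝ) 1 := fun h => absurd h.1 (not_lt.2 hneg.le)
        simp only [Pi.add_apply, Set.indicator_of_mem h1, Set.indicator_of_mem hx,
          Set.indicator_of_notMem h3, add_zero, Set.indicator_of_mem hx, hc, hsum]
      · have h1 : x ∉ Set.Ioo (-1:ℝ) 0 := fun h => absurd h.2 (not_lt.2 hpos.le)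
        have h3 : x ∈ Set.Ioo (0:ℝ) 1 := ⟨hpos, hx.2⟩
        simp only [Pi.add_apply, Set.indicator_of_notMem h1, Set.indicator_of_mem hx,
          Set.indicator_of_mem h3, zero_add, hc, hsum]
    · have h1 : x ∉ Set.Ioo (-1:ℝ) 0 := by
        intro h; exact hx ⟨h.1, lt_trans h.2 one_pos⟩
      have h3 : x ∉ Set.Ioo (0:ℝ) 1 := by
        intro h; exact hx ⟨lt_trans (by norm_num) h.1, h.2⟩
      simp [Pi.add_apply, Set.indicator_of_notMem h1, Set.indicator_of_notMem hx,
        Set.indicator_of_notMem h3]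
  have : {x : ℝ | ¬ ((Set.Ioo (-1:ℝ) 0).indicator cdens + (Set.Ioo (-1:ℝ) 1).indicator cdens
        + (Set.Ioo (0:ℝ) 1).indicator cdens) x
      = ENNReal.ofReal
          (Set.indicator (Set.Ioo (-1 : ℝ) 1) (fun y => 1 / (π * Real.sqrt (1 - y ^ 2))) x)}
      ⊆ {(0:ℝ)} := by
    intro x hx
    by_contra h
    exact hx (hpt x (by simpa using h))
  exact measure_mono_null this (measure_singleton 0)

lemma restrict_decomp :
    unifHalf = volume.restrict (Set.Ioo (-(1/2):ℝ) (-(1/4)))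
      + volume.restrict (Set.Ioo (-(1/4):ℝ) (1/4))
      + volume.restrict (Set.Ioo ((1/4):ℝ) (1/2)) := by
  have hae : Set.Icc (-(1/2):ℝ) (1/2)
      =ᵐ[volume] ((Set.Ioo (-(1/2):ℝ) (-(1/4)) ∪ Set.Ioo (-(1/4):ℝ) (1/4)
        ∪ Set.Ioo ((1/4):ℝ) (1/2) : Set ℝ)) := by
    apply (MeasureTheory.ae_eq_set).2
    constructor
    · refine measure_mono_null ?sub (?nul : volume ({-(1/2), -(1/4), (1/4), (1/2)} : Set ℝ) = 0)
      case sub =>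
        rintro x ⟨⟨hl, hr⟩, hn⟩
        simp only [Set.mem_union, Set.mem_Ioo, not_or, not_and_or, not_lt] at hn
        obtain ⟨⟨h1, h2⟩, h3⟩ := hn
        simp only [Set.mem_insert_iff, Set.mem_singleton_iff]
        rcases h1 with h1 | h1
        · left; linarith
        · rcases h2 with h2 | h2
          · right; left; linarith
          · rcases h3 with h3 | h3
            · right; right; left; linarith
            · right; right; right; linarith
      case nul =>
        exact (Set.toFinite _).measure_zero _
    · refine measure_mono_null ?sub2 (?nul2 : volume (∅ : Set ℝ) = 0)
      case sub2 =>
        rintro x ⟨hx, hn⟩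
        exfalso
        apply hn
        rcases hx with (hx | hx) | hx <;>
          exact ⟨by linarith [hx.1], by linarith [hx.2]⟩
      case nul2 => simp
  rw [unifHalf, Measure.restrict_congr_set hae,
    Measure.restrict_union ?d1 measurableSet_Ioo,
    Measure.restrict_union ?d2 measurableSet_Ioo]
  case d1 =>
    rw [Set.disjoint_union_left]
    constructor <;> (rw [Set.disjoint_left]; rintro x ⟨_, h2⟩ ⟨h3, _⟩; linarith)
  case d2 =>
    rw [Set.disjoint_left]; rintro x ⟨_, h2⟩ ⟨h3, _⟩; linarith

theorem stmt_3 :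
    Measure.map (fun y : ℝ => Real.sin (2 * π * y)) unifHalf
        = volume.withDensity (fun y : ℝ =>
            ENNReal.ofReal
              (Set.indicator (Set.Ioo (-1 : ℝ) 1)
                (fun y => 1 / (π * Real.sqrt (1 - y ^ 2))) y)) ∧
      Measure.map (fun y : ℝ => Real.sin (2 * π * y)) unifHalf ≪ volume := by
  have hmeas : Measurable fsin := fsin_cont.measurable
  have heq : Measure.map (fun y : ℝ => Real.sin (2 * π * y)) unifHalf
      = volume.withDensity (fun y : ℝ =>
          ENNReal.ofReal
            (Set.indicator (Set.Ioo (-1 : ℝ) 1)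
              (fun y => 1 / (π * Real.sqrt (1 - y ^ 2))) y)) := by
    have hf : (fun y : ℝ => Real.sin (2 * π * y)) = fsin := rfl
    rw [hf, restrict_decomp, Measure.map_add _ _ hmeas, Measure.map_add _ _ hmeas]
    rw [map_piece (anti_left.injOn.mono Set.Ioo_subset_Icc_self)
        (fun y hy => ne_of_lt (cos_neg_left y hy)) image_left measurableSet_Ioo,
      map_piece (mono_mid.injOn.mono Set.Ioo_subset_Icc_self)
        (fun y hy => ne_of_gt (cos_pos_mid y hy)) image_mid measurableSet_Ioo,
      map_piece (anti_right.injOn.mono Set.Ioo_subset_Icc_self)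
        (fun y hy => ne_of_lt (cos_neg_right y hy)) image_right measurableSet_Ioo]
    rw [← withDensity_add_right _ (cdens_meas.indicator measurableSet_Ioo),
      ← withDensity_add_right _ (cdens_meas.indicator measurableSet_Ioo)]
    exact withDensity_congr_ae density_ae_eq
  exact ⟨heq, heq ▸ withDensity_absolutelyContinuous _ _⟩
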